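/- Let C be E_10 or B_10. A vector v ∈ 𝔽₂^40 belongs to ρ_C(C) if and only if the following three conditions hold: (i) Proj(v) ∈ C; (ii) the ten columns of the 4×10 array of v all have the same parity; (iii) the parity of the top row of the array of v is even. -/

import Mathlib

open scoped BigOperators

section Defs

variable {F : Type} [Field F] [DecidableEq F]

/-- The binary coordinate in column `j` (0-indexed), row `k`. -/
def idx (j : Fin 10) (k : Fin 4) : Fin 40 :=
  ⟨4 * j.val + k.val, by have := j.isLt; have := k.isLt; omega⟩

/-- The map φ : GF(4) → 𝔽₂⁴, 0↦0000, 1↦0011, ω↦0101, ϖ↦0110. -/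
def phi (ω : F) : F → (Fin 4 → ZMod 2) := fun x =>
  if x = 0 then ![0, 0, 0, 0]
  else if x = 1 then ![0, 0, 1, 1]
  else if x = ω then ![0, 1, 0, 1]
  else ![0, 1, 1, 0]

/-- Ĉ : the image of a quaternary code under coordinatewise φ. -/
def hatSet (ω : F) (C : Set (Fin 10 → F)) : Set (Fin 40 → ZMod 2) :=
  { v | ∃ c ∈ C, ∀ (j : Fin 10) (k : Fin 4), v (idx j k) = phi ω (c j) k }

/-- d₄¹⁰ : binary vectors of length 40 constant on each of the ten columns. -/
def d4ten : Set (Fin 40 → ZMod 2) :=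
  { v | ∀ (j : Fin 10) (k k' : Fin 4), v (idx j k) = v (idx j k') }

/-- (d₄¹⁰)₀ : the subcode of d₄¹⁰ of codewords of weight divisible by 8. -/
def d4ten0 : Set (Fin 40 → ZMod 2) :=
  { v | v ∈ d4ten ∧ 8 ∣ hammingNorm v }

/-- The generator 1000 1000 ... 1000 of e_C. -/
def eCvec : Fin 40 → ZMod 2 := fun i => if i.val % 4 = 0 then 1 else 0

/-- The generator 1000 (×9) 0111 of e_B. -/
def eBvec : Fin 40 → ZMod 2 := fun i =>
  if i.val < 36 then (if i.val % 4 = 0 then 1 else 0)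
  else (if i.val % 4 = 0 then 0 else 1)

/-- ρ_C(C) = Ĉ + (d₄¹⁰)₀ + e_C. -/
def rhoC (ω : F) (C : Set (Fin 10 → F)) : Set (Fin 40 → ZMod 2) :=
  { v | ∃ a ∈ hatSet ω C, ∃ b ∈ d4ten0,
      ∃ e ∈ ({0, eCvec} : Set (Fin 40 → ZMod 2)), v = a + b + e }

/-- ρ_B(C) = Ĉ + (d₄¹⁰)₀ + e_B. -/
def rhoB (ω : F) (C : Set (Fin 10 → F)) : Set (Fin 40 → ZMod 2) :=
  { v | ∃ a ∈ hatSet ω C, ∃ b ∈ d4ten0,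
      ∃ e ∈ ({0, eBvec} : Set (Fin 40 → ZMod 2)), v = a + b + e }

/-- The trace inner product x⋆y = Σ Tr(xᵢ ȳᵢ), computed in GF(4) (its value lies
in the prime subfield GF(2)). -/
def traceIP (x y : Fin 10 → F) : F :=
  ∑ i, ((x i * (y i) ^ 2) + (x i * (y i) ^ 2) ^ 2)

/-- The dual of an additive code with respect to the trace inner product. -/
def addDual (C : Set (Fin 10 → F)) : Set (Fin 10 → F) :=
  { x | ∀ c ∈ C, traceIP x c = 0 }

/-- The dual of a binary code of length 40 under the standard inner product. -/
def binDual (S : Set (Fin 40 → ZMod 2)) : Set (Fin 40 → ZMod 2) :=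
  { x | ∀ c ∈ S, ∑ i, x i * c i = 0 }

/-- The dual of a quaternary code under the Hermitian inner product ⟨x,y⟩ = Σ xᵢ ȳᵢ. -/
def hermDual (S : Set (Fin 10 → F)) : Set (Fin 10 → F) :=
  { x | ∀ c ∈ S, ∑ i, x i * (c i) ^ 2 = 0 }

/-- The Hermitian self-dual [10,5,4] code E₁₀ over GF(4). -/
def E10 (ω : F) : Submodule F (Fin 10 → F) :=
  Submodule.span F {![1,1,1,1,0,0,0,0,0,0], ![0,0,1,1,1,1,0,0,0,0],
    ![0,0,0,0,1,1,1,1,0,0], ![0,0,0,0,0,0,1,1,1,1],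
    ![1,0,1,0,1,0,1,0,ω,ω^2]}

/-- The Hermitian self-dual [10,5,4] code B₁₀ over GF(4). -/
def B10 (ω : F) : Submodule F (Fin 10 → F) :=
  Submodule.span F {![1,1,1,1,0,0,0,0,0,0], ![0,1,ω,ω^2,1,0,0,0,0,0],
    ![0,0,0,0,0,1,1,1,1,0], ![0,0,0,0,0,0,1,ω,ω^2,1],
    ![0,1,ω^2,ω,0,0,1,ω^2,ω,0]}

/-- Interpret a bit as an element of GF(4). -/
def b2f (x : ZMod 2) : F := if x = 1 then 1 else 0

/-- The projection 𝔽₂⁴⁰ → GF(4)¹⁰ : column j ↦ v₂ᵢₙ·1 + v·ω + v·ϖ with row labels 0,1,ω,ϖ. -/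
def Proj (ω : F) (v : Fin 40 → ZMod 2) : Fin 10 → F := fun j =>
  b2f (v (idx j 1)) * 1 + b2f (v (idx j 2)) * ω + b2f (v (idx j 3)) * ω ^ 2

/-- The parity of column j (1 = odd number of ones). -/
def colPar (v : Fin 40 → ZMod 2) (j : Fin 10) : ZMod 2 := ∑ k, v (idx j k)

/-- The parity of the top row (1 = odd number of ones). -/
def topPar (v : Fin 40 → ZMod 2) : ZMod 2 := ∑ j, v (idx j 0)

/-- The coordinate permutation of Fin 10 permuting the five blocks {2m, 2m+1}
as units according to π, preserving order within blocks. -/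
def blockPerm (π : Equiv.Perm (Fin 5)) : Fin 10 → Fin 10 := fun t =>
  ⟨2 * (π ⟨t.val / 2, by have := t.isLt; omega⟩).val + t.val % 2, by
    have := (π ⟨t.val / 2, by have := t.isLt; omega⟩).isLt; have := t.isLt; omega⟩

/-- The coordinate permutation of Fin 10 interchanging the two coordinates within
each block belonging to S, fixing all other coordinates. -/
def blockSwap (S : Finset (Fin 5)) : Fin 10 → Fin 10 := fun t =>
  if (⟨t.val / 2, by have := t.isLt; omega⟩ : Fin 5) ∈ S then
    ⟨2 * (t.val / 2) + (1 - t.val % 2), by have := t.isLt; omega⟩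
  else t

end Defs

section Help
set_option linter.unusedSectionVars false
variable {F : Type} [Field F] [DecidableEq F]

lemma zmod2_cases (x : ZMod 2) : x = 0 ∨ x = 1 := by revert x; decide

lemma b2f_add (htwo : (1:F)+1 = 0) (x y : ZMod 2) : (b2f (x+y) : F) = b2f x + b2f y := by
  rcases zmod2_cases x with h|h <;> rcases zmod2_cases y with h'|h' <;>
    subst h h' <;> simp [b2f] <;> exact htwo.symm

variable (ω : F) (htwo : (1:F)+1 = 0) (hω : ω^2 = ω+1)

include htwo hω in
lemma omega_ne : ω ≠ 0 ∧ ω ≠ 1 ∧ ω^2 ≠ 0 ∧ ω^2 ≠ 1 ∧ ω^2 ≠ ω := by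
  have h0 : ω ≠ 0 := by
    intro h; rw [h] at hω; simp at hω
  have h1 : ω ≠ 1 := by
    intro h; rw [h, htwo] at hω; simp at hω
  refine ⟨h0, h1, ?_, ?_, ?_⟩
  · intro h; exact h0 (pow_eq_zero_iff (n := 2) (by norm_num) |>.mp h)
  · intro h; rw [hω] at h; exact h0 (by linear_combination h)
  · intro h; rw [hω] at h
    exact one_ne_zero (α := F) (by linear_combination h)

include htwo hω in
lemma phi_omega2 : phi ω (ω^2) = ![0,1,1,0] := by
  obtain ⟨h1,h2,h3,h4,h5⟩ := omega_ne ω htwo hω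
  simp [phi, h3, h4, h5]

include htwo hω in
lemma phi_omega : phi ω ω = ![0,1,0,1] := by
  obtain ⟨h1,h2,_,_,_⟩ := omega_ne ω htwo hω
  simp [phi, h1, h2]

lemma phi_one : phi ω 1 = ![0,0,1,1] := by simp [phi]

lemma phi_zero : phi ω 0 = ![0,0,0,0] := by simp [phi]

lemma phi_top (x : F) : phi ω x 0 = 0 := by
  unfold phi; split_ifs <;> rfl

lemma phi_sum (x : F) : phi ω x 0 + phi ω x 1 + phi ω x 2 + phi ω x 3 = 0 := by
  unfold phi; split_ifs <;> decide

include htwo hω in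
lemma phi_proj (x : F) (henum : ∀ y : F, y = 0 ∨ y = 1 ∨ y = ω ∨ y = ω^2) :
    (b2f (phi ω x 1) * 1 + b2f (phi ω x 2) * ω + b2f (phi ω x 3) * ω^2 : F) = x := by
  rcases henum x with h|h|h|h <;> rw [h]
  · rw [phi_zero]; norm_num [b2f, Matrix.cons_val_two, Matrix.cons_val_three]
  · rw [phi_one]; norm_num [b2f, Matrix.cons_val_two, Matrix.cons_val_three]; linear_combination hω + ω * htwo
  · rw [phi_omega ω htwo hω]; norm_num [b2f, Matrix.cons_val_two, Matrix.cons_val_three]; linear_combination hω + htwo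
  · rw [phi_omega2 ω htwo hω]; norm_num [b2f, Matrix.cons_val_two, Matrix.cons_val_three]; linear_combination -hω

include htwo hω in
lemma phi_recover (v1 v2 v3 : ZMod 2) :
    ∀ k : Fin 4, k ≠ 0 →
    phi ω (b2f v1 * 1 + b2f v2 * ω + b2f v3 * ω^2) k = ![0,v1,v2,v3] k + (v1+v2+v3) := by
  have harg : (b2f (0:ZMod 2) : F) = 0 := by simp [b2f]
  have harg1 : (b2f (1:ZMod 2) : F) = 1 := by simp [b2f]
  rcases zmod2_cases v1 with h|h <;> rcases zmod2_cases v2 with h'|h' <;>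
    rcases zmod2_cases v3 with h''|h'' <;> subst h h' h'' <;>
    simp only [harg, harg1, zero_mul, one_mul, add_zero, zero_add, mul_one]
  · rw [phi_zero]; decide
  · rw [phi_omega2 ω htwo hω]; decide
  · rw [phi_omega ω htwo hω]; decide
  · rw [show (ω + ω^2 : F) = 1 by linear_combination hω + ω * htwo, phi_one]; decide
  · rw [phi_one]; decide
  · rw [show (1 + ω^2 : F) = ω by linear_combination hω + htwo, phi_omega ω htwo hω]; decide
  · rw [show (1 + ω : F) = ω^2 by linear_combination -hω, phi_omega2 ω htwo hω]; decide
  · rw [show (1 + ω + ω^2 : F) = 0 by linear_combination hω + (1+ω) * htwo, phi_zero]; decide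

def colEquiv : (Fin 10 × Fin 4) ≃ Fin 40 where
  toFun p := idx p.1 p.2
  invFun i := (⟨i.val / 4, by have := i.isLt; omega⟩, ⟨i.val % 4, by have := i.isLt; omega⟩)
  left_inv := by
    rintro ⟨j, k⟩
    have hj := j.isLt; have hk := k.isLt
    refine Prod.ext ?_ ?_ <;> (apply Fin.ext; simp [idx] <;> omega)
  right_inv := by
    intro i; have := i.isLt
    apply Fin.ext; simp [idx]; omega

lemma sum40 {M : Type} [AddCommMonoid M] (f : Fin 40 → M) :
    ∑ i, f i = ∑ j : Fin 10, ∑ k : Fin 4, f (idx j k) := by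
  calc ∑ i, f i = ∑ p : Fin 10 × Fin 4, f (idx p.1 p.2) :=
        (Fintype.sum_equiv colEquiv (fun p => f (idx p.1 p.2)) f (fun p => rfl)).symm
    _ = ∑ j : Fin 10, ∑ k : Fin 4, f (idx j k) := Fintype.sum_prod_type _

lemma idx_apply (v : Fin 40 → ZMod 2) (j : Fin 10) (k : Fin 4) :
    v (idx j k) = v ⟨4 * j.val + k.val, by have := j.isLt; have := k.isLt; omega⟩ := rfl

lemma d4_weight (b : Fin 40 → ZMod 2) (hb : ∀ (j : Fin 10) (k k' : Fin 4), b (idx j k) = b (idx j k')) :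
    8 ∣ hammingNorm b ↔ ∑ j, b (idx j 0) = 0 := by
  have h1 : hammingNorm b = ∑ i, if b i ≠ 0 then 1 else 0 := by
    rw [hammingNorm]; simp [Finset.card_filter]
  have h2 : hammingNorm b = 4 * ∑ j : Fin 10, (if b (idx j 0) ≠ 0 then 1 else 0) := by
    rw [h1, sum40, Finset.mul_sum]
    refine Finset.sum_congr rfl fun j _ => ?_
    have hc : ∀ k, b (idx j k) = b (idx j 0) := fun k => hb j k 0
    rw [Fin.sum_univ_four, hc 1, hc 2, hc 3]
    split_ifs <;> norm_num
  rw [h2]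
  have h3 : (8 ∣ 4 * ∑ j : Fin 10, (if b (idx j 0) ≠ 0 then 1 else 0)) ↔
      2 ∣ ∑ j : Fin 10, (if b (idx j 0) ≠ 0 then 1 else 0) := by
    constructor <;> intro ⟨c, hcc⟩ <;> exact ⟨c, by omega⟩
  have h4 : ((∑ j : Fin 10, if b (idx j 0) ≠ 0 then 1 else 0 : ℕ) : ZMod 2)
      = ∑ j, b (idx j 0) := by
    push_cast
    refine Finset.sum_congr rfl fun j _ => ?_
    rcases zmod2_cases (b (idx j 0)) with hh|hh <;> rw [hh] <;> norm_num
  rw [h3, ← ZMod.natCast_eq_zero_iff _ 2, h4]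
end Help

section Main
set_option linter.unusedSectionVars false
variable {F : Type} [Field F] [DecidableEq F]

lemma b2f0 : (b2f (0 : ZMod 2) : F) = 0 := by simp [b2f]

lemma Proj_add (ω : F) (htwo : (1:F)+1 = 0) (x y : Fin 40 → ZMod 2) (j : Fin 10) :
    Proj ω (x + y) j = Proj ω x j + Proj ω y j := by
  simp only [Proj, Pi.add_apply, b2f_add htwo]; ring

lemma eC_idx (j : Fin 10) (k : Fin 4) : eCvec (idx j k) = if k.val = 0 then 1 else 0 := by
  have h : (4 * j.val + k.val) % 4 = k.val := by have := k.isLt; omega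
  simp only [eCvec, idx, h]

lemma colPar_add (x y : Fin 40 → ZMod 2) (j : Fin 10) :
    colPar (x+y) j = colPar x j + colPar y j := by
  simp [colPar, Finset.sum_add_distrib]

lemma topPar_add (x y : Fin 40 → ZMod 2) : topPar (x+y) = topPar x + topPar y := by
  simp [topPar, Finset.sum_add_distrib]

lemma main_iff (ω : F) (htwo : (1:F)+1 = 0) (hω : ω^2 = ω+1)
    (henum : ∀ y : F, y = 0 ∨ y = 1 ∨ y = ω ∨ y = ω^2)
    (C : Set (Fin 10 → F)) (v : Fin 40 → ZMod 2) :
    v ∈ rhoC ω C ↔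
      Proj ω v ∈ C ∧ (∀ j j' : Fin 10, colPar v j = colPar v j') ∧ topPar v = 0 := by
  constructor
  · rintro ⟨a, ⟨c, hcC, ha⟩, b, ⟨hbd, hb8⟩, e, he, rfl⟩
    simp only [Set.mem_insert_iff, Set.mem_singleton_iff] at he
    have hPa : ∀ j, Proj ω a j = c j := by
      intro j
      simp only [Proj, ha]
      exact phi_proj ω htwo hω (c j) henum
    have hPb : ∀ j, Proj ω b j = 0 := by
      intro j
      simp only [Proj, hbd j 1 0, hbd j 2 0, hbd j 3 0]
      have h1 : (1 : F) + ω + ω^2 = 0 := by linear_combination hω + (1+ω) * htwo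
      linear_combination (b2f (b (idx j 0)) : F) * h1
    have hPe : ∀ j, Proj ω e j = 0 := by
      intro j; rcases he with rfl | rfl
      · simp [Proj, b2f0]
      · have h1 : eCvec (idx j 1) = 0 := by rw [eC_idx]; decide
        have h2 : eCvec (idx j 2) = 0 := by rw [eC_idx]; decide
        have h3 : eCvec (idx j 3) = 0 := by rw [eC_idx]; decide
        simp [Proj, h1, h2, h3, b2f0]
    have hca : ∀ j, colPar a j = 0 := by
      intro j; simp only [colPar, Fin.sum_univ_four, ha]; exact phi_sum ω (c j)
    have hcb : ∀ j, colPar b j = 0 := by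
      intro j
      simp only [colPar, Fin.sum_univ_four, hbd j 1 0, hbd j 2 0, hbd j 3 0]
      have h4 : ∀ t : ZMod 2, t + t + t + t = 0 := by decide
      exact h4 _
    have hta : topPar a = 0 := by
      simp only [topPar, ha]
      simp [phi_top]
    have htb : topPar b = 0 := (d4_weight b hbd).mp hb8
    refine ⟨?_, ?_, ?_⟩
    · have hPv : Proj ω (a + b + e) = c := by
        funext j
        rw [Proj_add ω htwo, Proj_add ω htwo, hPa, hPb, hPe, add_zero, add_zero]
      rw [hPv]; exact hcC
    · intro j j'
      rw [colPar_add, colPar_add, colPar_add, colPar_add, hca j, hca j', hcb j, hcb j']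
      rcases he with rfl | rfl
      · rfl
      · have hce : ∀ j : Fin 10, colPar eCvec j = 1 := by decide
        rw [hce j, hce j']
    · rw [topPar_add, topPar_add, hta, htb]
      rcases he with rfl | rfl
      · decide
      · decide
  · rintro ⟨hC, hcol, htop⟩
    have hsymm : ∀ (j : Fin 10) (k : Fin 4), colEquiv.symm (idx j k) = (j, k) :=
      fun j k => colEquiv.symm_apply_apply (j, k)
    have hcolj : ∀ j, colPar v 0
        = v (idx j 0) + v (idx j 1) + v (idx j 2) + v (idx j 3) := by
      intro j; rw [hcol 0 j]; simp [colPar, Fin.sum_univ_four]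
    have hbcol : ∀ (j : Fin 10) (k : Fin 4),
        v (idx j k) + phi ω (Proj ω v (colEquiv.symm (idx j k)).1) (colEquiv.symm (idx j k)).2
          + colPar v 0 * eCvec (idx j k)
        = v (idx j 1) + v (idx j 2) + v (idx j 3) := by
      intro j k
      have hk : k = 0 ∨ k = 1 ∨ k = 2 ∨ k = 3 := by revert k; decide
      rw [hsymm, eC_idx]
      dsimp only
      have hrec := phi_recover ω htwo hω (v (idx j 1)) (v (idx j 2)) (v (idx j 3))
      have hProjj : Proj ω v j
          = b2f (v (idx j 1)) * 1 + b2f (v (idx j 2)) * ω + b2f (v (idx j 3)) * ω^2 := rfl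
      rcases hk with rfl|rfl|rfl|rfl
      · rw [if_pos (by decide : ((0 : Fin 4)).val = 0), mul_one, phi_top, hcolj j]
        generalize v (idx j 0) = x0
        generalize v (idx j 1) = x1
        generalize v (idx j 2) = x2
        generalize v (idx j 3) = x3
        rcases zmod2_cases x0 with rfl|rfl <;> rcases zmod2_cases x1 with rfl|rfl <;>
          rcases zmod2_cases x2 with rfl|rfl <;> rcases zmod2_cases x3 with rfl|rfl <;> decide
      all_goals {
        rw [if_neg (by decide), mul_zero, hProjj, hrec _ (by decide)]
        generalize v (idx j 1) = x1
        generalize v (idx j 2) = x2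
        generalize v (idx j 3) = x3
        rcases zmod2_cases x1 with rfl|rfl <;>
          rcases zmod2_cases x2 with rfl|rfl <;> rcases zmod2_cases x3 with rfl|rfl <;> decide
      }
    refine ⟨fun i => phi ω (Proj ω v (colEquiv.symm i).1) (colEquiv.symm i).2,
            ⟨Proj ω v, hC, fun j k => by beta_reduce; rw [hsymm]⟩,
            fun i => v i + phi ω (Proj ω v (colEquiv.symm i).1) (colEquiv.symm i).2
              + colPar v 0 * eCvec i,
            ⟨?_, ?_⟩,
            fun i => colPar v 0 * eCvec i, ?_, ?_⟩
    · intro j k k'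
      beta_reduce
      rw [hbcol j k, hbcol j k']
    · rw [d4_weight _ (fun j k k' => by beta_reduce; rw [hbcol j k, hbcol j k'])]
      have hterm : ∀ j : Fin 10,
          v (idx j 0) + phi ω (Proj ω v (colEquiv.symm (idx j 0)).1) (colEquiv.symm (idx j 0)).2
            + colPar v 0 * eCvec (idx j 0)
          = v (idx j 0) + colPar v 0 := by
        intro j
        rw [hbcol j 0, hcolj j]
        generalize v (idx j 0) = x0
        generalize v (idx j 1) = x1
        generalize v (idx j 2) = x2
        generalize v (idx j 3) = x3
        rcases zmod2_cases x0 with rfl|rfl <;> rcases zmod2_cases x1 with rfl|rfl <;>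
          rcases zmod2_cases x2 with rfl|rfl <;> rcases zmod2_cases x3 with rfl|rfl <;> decide
      calc (∑ j : Fin 10, (v (idx j 0)
              + phi ω (Proj ω v (colEquiv.symm (idx j 0)).1) (colEquiv.symm (idx j 0)).2
              + colPar v 0 * eCvec (idx j 0)))
          = ∑ j : Fin 10, (v (idx j 0) + colPar v 0) :=
            Finset.sum_congr rfl (fun j _ => hterm j)
        _ = topPar v + ∑ _j : Fin 10, colPar v 0 := by
            rw [Finset.sum_add_distrib]; rfl
        _ = 0 := by
            rw [htop, zero_add, Finset.sum_const, Finset.card_univ, Fintype.card_fin]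
            have h10 : ∀ x : ZMod 2, (10 : ℕ) • x = 0 := by decide
            exact h10 _
    · simp only [Set.mem_insert_iff, Set.mem_singleton_iff]
      rcases zmod2_cases (colPar v 0) with h|h
      · left; funext i; simp [h]
      · right; funext i; simp [h]
    · funext i
      simp only [Pi.add_apply]
      have hz : ∀ x y z : ZMod 2, x = y + (x + y + z) + z := by decide
      exact hz _ _ _

end Main

/-- For C = E₁₀ or B₁₀, v ∈ ρ_C(C) iff Proj(v) ∈ C, all ten column
parities agree, and the top-row parity is even. -/
theorem stmt_12 (F : Type) [Field F] [Fintype F] [DecidableEq F]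
    (hF : Fintype.card F = 4) (ω : F) (hω : ω ^ 2 = ω + 1) :
    ∀ C ∈ ({(E10 ω : Set (Fin 10 → F)),
            (B10 ω : Set (Fin 10 → F))} : Set (Set (Fin 10 → F))),
      ∀ v : Fin 40 → ZMod 2,
        v ∈ rhoC ω C ↔
          Proj ω v ∈ C ∧
          (∀ j j' : Fin 10, colPar v j = colPar v j') ∧
          topPar v = 0 := by
  have htwo : (1:F) + 1 = 0 := by
    have h4 : ((4:ℕ) : F) = 0 := by rw [← hF]; exact FiniteField.cast_card_eq_zero F
    have h2 : ((1:F)+1) * ((1:F)+1) = 0 := by push_cast at h4; linear_combination h4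
    rcases mul_eq_zero.mp h2 with h|h <;> exact h
  have henum : ∀ y : F, y = 0 ∨ y = 1 ∨ y = ω ∨ y = ω^2 := by
    intro y
    by_contra hcon
    push_neg at hcon
    obtain ⟨hy0, hy1, hyω, hyω2⟩ := hcon
    obtain ⟨h1, h2, h3, h4, h5⟩ := omega_ne ω htwo hω
    have m4 : (ω^2) ∉ ({y} : Finset F) := by
      simp only [Finset.mem_singleton]; exact Ne.symm hyω2
    have m3 : ω ∉ ({ω^2, y} : Finset F) := by
      simp only [Finset.mem_insert, Finset.mem_singleton]
      push_neg; exact ⟨Ne.symm h5, Ne.symm hyω⟩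
    have m2 : (1:F) ∉ ({ω, ω^2, y} : Finset F) := by
      simp only [Finset.mem_insert, Finset.mem_singleton]
      push_neg; exact ⟨Ne.symm h2, Ne.symm h4, Ne.symm hy1⟩
    have m1 : (0:F) ∉ ({1, ω, ω^2, y} : Finset F) := by
      simp only [Finset.mem_insert, Finset.mem_singleton]
      push_neg
      exact ⟨Ne.symm one_ne_zero, Ne.symm h1, Ne.symm h3, Ne.symm hy0⟩
    have hcard : ({0, 1, ω, ω^2, y} : Finset F).card = 5 := by
      rw [show ({0,1,ω,ω^2,y} : Finset F)
            = insert 0 (insert 1 (insert ω (insert (ω^2) {y}))) from rfl,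
          Finset.card_insert_of_notMem m1, Finset.card_insert_of_notMem m2,
          Finset.card_insert_of_notMem m3, Finset.card_insert_of_notMem m4,
          Finset.card_singleton]
    have hle : ({0, 1, ω, ω^2, y} : Finset F).card ≤ 4 := by
      have hcu := Finset.card_le_univ ({0, 1, ω, ω^2, y} : Finset F)
      rwa [hF] at hcu
    omega
  intro C _hC v
  exact main_iff ω htwo hω henum C v
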